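/- arXiv:2301.02015 — 4 statements merged into one kernel-verified Lean document; each statement's English description precedes it below -/
import Mathlib

section
/- Let υ1, υ2 > 0 with Υ = 1/υ1 + 1/υ2 > 1, let ρ(u1,u2) = |u1|^{υ1} + |u2|^{υ2}, and let L : ℝ²∖{(0,0)} → ℝ be a bounded measurable function. Then for all x1, x2 > 0 the function u = (u1,u2) ↦ |1−e^{i u1 x1}|² · |1−e^{i u2 x2}|² · u1^{−2} · u2^{−2} · |L(u)|/ρ(u) is integrable on ℝ². (This establishes the existence of the well-balanced Gaussian limit field V_{0,1/ρ} defined by the spectral integral with density L/ρ.) -/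
open MeasureTheory Real Filter Topology

noncomputable section

/-- `ρ(x₁,x₂) = |x₁|^{υ₁} + |x₂|^{υ₂}`. -/
def rho (v1 v2 : ℝ) (x : ℝ × ℝ) : ℝ := |x.1| ^ v1 + |x.2| ^ v2

lemma norm_one_sub_exp_le (t : ℝ) :
    ‖(1 : ℂ) - Complex.exp (Complex.I * t)‖ ≤ 2 * min 1 |t| := by
  rcases le_total |t| 1 with h | h
  · have habs : ‖Complex.I * t‖ = |t| := by
      rw [norm_mul, Complex.norm_I, one_mul, Complex.norm_real, Real.norm_eq_abs]
    have := Complex.norm_exp_sub_one_le (x := Complex.I * t) (by rwa [habs])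
    rw [habs] at this
    rw [norm_sub_rev, min_eq_right h]
    simpa using this
  · rw [min_eq_left h]
    calc ‖(1 : ℂ) - Complex.exp (Complex.I * t)‖
        ≤ ‖(1 : ℂ)‖ + ‖Complex.exp (Complex.I * t)‖ := norm_sub_le _ _
      _ = 2 * 1 := by
          rw [norm_one, mul_comm Complex.I (t : ℂ),
            Complex.norm_exp_ofReal_mul_I]
          norm_num

lemma norm_sq_one_sub_exp_le (a b : ℝ) :
    ‖(1 : ℂ) - Complex.exp (Complex.I * a * b)‖ ^ 2 ≤ 4 * min 1 (a ^ 2 * b ^ 2) := by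
  have harg : Complex.I * (a : ℂ) * (b : ℂ) = Complex.I * ((a * b : ℝ) : ℂ) := by
    push_cast; ring
  have h1 := norm_one_sub_exp_le (a * b)
  have h2 : ‖(1 : ℂ) - Complex.exp (Complex.I * a * b)‖ ^ 2 ≤ (2 * min 1 |a * b|) ^ 2 := by
    rw [harg]
    exact pow_le_pow_left₀ (norm_nonneg _) h1 2
  refine h2.trans_eq ?_
  have habsq : |a * b| ^ 2 = a ^ 2 * b ^ 2 := by rw [sq_abs, mul_pow]
  have hmin : (min 1 |a * b|) ^ 2 = min 1 (a ^ 2 * b ^ 2) := by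
    rcases le_total |a * b| 1 with h | h
    · rw [min_eq_right h, habsq, min_eq_right (by nlinarith [abs_nonneg (a * b)])]
    · rw [min_eq_left h, one_pow, min_eq_left (by nlinarith)]
  rw [mul_pow, hmin]; norm_num

lemma integrable_oneDim {c : ℝ} (hc0 : 0 < c) (hc1 : c < 1) (x : ℝ) :
    Integrable (fun u : ℝ => min 1 (u ^ 2 * x ^ 2) / (u ^ 2 * |u| ^ c)) := by
  set g : ℝ → ℝ := fun u => min 1 (u ^ 2 * x ^ 2) / (u ^ 2 * |u| ^ c) with hgdef
  have hgm : Measurable g := by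
    apply Measurable.div
    · exact (continuous_const.min ((continuous_pow 2).mul continuous_const)).measurable
    · exact ((continuous_pow 2).mul
        ((Real.continuous_rpow_const hc0.le).comp continuous_abs)).measurable
  have hgnn : ∀ u, 0 ≤ g u := fun u =>
    div_nonneg (le_min zero_le_one (by positivity)) (by positivity)
  have hIoc : IntegrableOn g (Set.Ioc 0 1) := by
    have hint : IntegrableOn (fun u : ℝ => x ^ 2 * u ^ (-c)) (Set.Ioc 0 1) :=
      ((intervalIntegral.intervalIntegrable_rpow' (by linarith) (a := 0) (b := 1)).1).const_mul _
    refine hint.mono' hgm.aestronglyMeasurable.restrict ?_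
    filter_upwards [ae_restrict_mem measurableSet_Ioc] with u hu
    obtain ⟨hu0, hu1⟩ := hu
    rw [Real.norm_of_nonneg (hgnn u)]
    have habs : |u| = u := abs_of_pos hu0
    have huc : (0 : ℝ) < u ^ c := Real.rpow_pos_of_pos hu0 c
    calc g u ≤ (u ^ 2 * x ^ 2) / (u ^ 2 * |u| ^ c) := by
          simp only [hgdef]
          gcongr
          exact min_le_right _ _
      _ = x ^ 2 * u ^ (-c) := by
          rw [habs, Real.rpow_neg hu0.le]
          field_simp
  have hIoi : IntegrableOn g (Set.Ioi 1) := by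
    have hint : IntegrableOn (fun u : ℝ => u ^ (-(2 + c))) (Set.Ioi 1) :=
      integrableOn_Ioi_rpow_of_lt (by linarith) one_pos
    refine hint.mono' hgm.aestronglyMeasurable.restrict ?_
    filter_upwards [ae_restrict_mem measurableSet_Ioi] with u hu
    have hu0 : (0 : ℝ) < u := lt_trans one_pos hu
    rw [Real.norm_of_nonneg (hgnn u)]
    have habs : |u| = u := abs_of_pos hu0
    have huc : (0 : ℝ) < u ^ c := Real.rpow_pos_of_pos hu0 c
    calc g u ≤ 1 / (u ^ 2 * |u| ^ c) := by
          simp only [hgdef]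
          gcongr
          exact min_le_left _ _
      _ = u ^ (-(2 + c)) := by
          rw [habs, Real.rpow_neg hu0.le, Real.rpow_add hu0,
            show u ^ (2 : ℝ) = u ^ 2 from by
              rw [show (2 : ℝ) = ((2 : ℕ) : ℝ) by norm_num, Real.rpow_natCast],
            one_div, mul_inv]
  have hpos : IntegrableOn g (Set.Ioi 0) := by
    rw [← Set.Ioc_union_Ioi_eq_Ioi (zero_le_one' ℝ)]
    exact hIoc.union hIoi
  have heven : ∀ u, g (-u) = g u := by
    intro u; simp only [hgdef, neg_sq, abs_neg]
  have hIio : IntegrableOn g (Set.Iio 0) := by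
    have h1 : Integrable ((Set.Ioi (0 : ℝ)).indicator g) :=
      (integrable_indicator_iff measurableSet_Ioi).2 hpos
    have h2 := h1.comp_neg
    have h3 : (fun u : ℝ => (Set.Ioi (0 : ℝ)).indicator g (-u))
        = (Set.Iio (0 : ℝ)).indicator g := by
      funext u
      by_cases hu : u < 0
      · rw [Set.indicator_of_mem (Set.mem_Ioi.2 (neg_pos.2 hu)),
          Set.indicator_of_mem (Set.mem_Iio.2 hu), heven]
      · rw [Set.indicator_of_notMem (fun h => hu (neg_pos.1 (Set.mem_Ioi.1 h))),
          Set.indicator_of_notMem (fun h => hu (Set.mem_Iio.1 h))]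
    rw [h3] at h2
    exact (integrable_indicator_iff measurableSet_Iio).1 h2
  have hzero : IntegrableOn g ({0} : Set ℝ) := by
    unfold IntegrableOn
    have : (volume : Measure ℝ).restrict ({0} : Set ℝ) = 0 := by
      simp [Measure.restrict_singleton]
    rw [this]
    exact integrable_zero_measure
  rw [← integrableOn_univ]
  have huniv : (Set.univ : Set ℝ) = (Set.Iio 0 ∪ Set.Ioi 0) ∪ {0} := by
    ext y
    simp only [Set.mem_univ, true_iff, Set.mem_union, Set.mem_Iio, Set.mem_Ioi,
      Set.mem_singleton_iff]
    rcases lt_trichotomy y 0 with h | h | h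
    · exact Or.inl (Or.inl h)
    · exact Or.inr h
    · exact Or.inl (Or.inr h)
  rw [huniv]
  exact (hIio.union hpos).union hzero

theorem stmt9 (v1 v2 : ℝ) (hv1 : 0 < v1) (hv2 : 0 < v2)
    (hups : 1 < 1 / v1 + 1 / v2)
    (L : ℝ × ℝ → ℝ) (hLmeas : Measurable L)
    (hLbdd : ∃ C : ℝ, ∀ x : ℝ × ℝ, x ≠ 0 → |L x| ≤ C)
    (x1 x2 : ℝ) (hx1 : 0 < x1) (hx2 : 0 < x2) :
    Integrable (fun u : ℝ × ℝ =>
      ‖(1 : ℂ) - Complex.exp (Complex.I * (u.1 : ℂ) * (x1 : ℂ))‖ ^ 2 *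
        ‖(1 : ℂ) - Complex.exp (Complex.I * (u.2 : ℂ) * (x2 : ℂ))‖ ^ 2 /
          (u.1 ^ 2 * u.2 ^ 2) * (|L u| / rho v1 v2 u)) := by
  obtain ⟨C, hC⟩ := hLbdd
  set C' : ℝ := max C 0 with hC'def
  have hC'0 : 0 ≤ C' := le_max_right _ _
  have hC' : ∀ x : ℝ × ℝ, x ≠ 0 → |L x| ≤ C' := fun x hx => (hC x hx).trans (le_max_left _ _)
  set s : ℝ := 1 / v1 + 1 / v2 with hsdef
  have hs1 : 1 < s := hups
  have hs0 : 0 < s := lt_trans one_pos hs1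
  set c : ℝ := 1 / s with hcdef
  have hc0 : 0 < c := by positivity
  have hc1 : c < 1 := by
    rw [hcdef, div_lt_one hs0]; exact hs1
  -- AM-GM : |y1|^c * |y2|^c ≤ rho
  have key : ∀ y1 y2 : ℝ, |y1| ^ c * |y2| ^ c ≤ |y1| ^ v1 + |y2| ^ v2 := by
    intro y1 y2
    set a : ℝ := (1 / v1) / s with hadef
    set b : ℝ := (1 / v2) / s with hbdef
    have ha0 : 0 ≤ a := by positivity
    have hb0 : 0 ≤ b := by positivity
    have hab : a + b = 1 := by
      rw [hadef, hbdef, ← add_div, hsdef]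
      field_simp
    have ha1 : a ≤ 1 := by nlinarith
    have hb1 : b ≤ 1 := by nlinarith
    have hgm := Real.geom_mean_le_arith_mean2_weighted ha0 hb0
      (Real.rpow_nonneg (abs_nonneg y1) v1) (Real.rpow_nonneg (abs_nonneg y2) v2) hab
    have e1 : (|y1| ^ v1) ^ a = |y1| ^ c := by
      rw [← Real.rpow_mul (abs_nonneg y1)]
      congr 1
      rw [hadef, hcdef]
      field_simp
    have e2 : (|y2| ^ v2) ^ b = |y2| ^ c := by
      rw [← Real.rpow_mul (abs_nonneg y2)]
      congr 1
      rw [hbdef, hcdef]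
      field_simp
    rw [e1, e2] at hgm
    refine hgm.trans ?_
    have h1 : a * |y1| ^ v1 ≤ |y1| ^ v1 := by
      nlinarith [Real.rpow_nonneg (abs_nonneg y1) v1]
    have h2 : b * |y2| ^ v2 ≤ |y2| ^ v2 := by
      nlinarith [Real.rpow_nonneg (abs_nonneg y2) v2]
    linarith
  -- dominating function
  set g1 : ℝ → ℝ := fun u => min 1 (u ^ 2 * x1 ^ 2) / (u ^ 2 * |u| ^ c) with hg1def
  set g2 : ℝ → ℝ := fun u => min 1 (u ^ 2 * x2 ^ 2) / (u ^ 2 * |u| ^ c) with hg2def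
  have hg1 : Integrable g1 := integrable_oneDim hc0 hc1 x1
  have hg2 : Integrable g2 := integrable_oneDim hc0 hc1 x2
  have hg1nn : ∀ u, 0 ≤ g1 u := fun u =>
    div_nonneg (le_min zero_le_one (by positivity)) (by positivity)
  have hg2nn : ∀ u, 0 ≤ g2 u := fun u =>
    div_nonneg (le_min zero_le_one (by positivity)) (by positivity)
  have hF : Integrable (fun u : ℝ × ℝ => 16 * C' * (g1 u.1 * g2 u.2)) := by
    have := hg1.mul_prod hg2
    rw [← Measure.volume_eq_prod] at this
    exact this.const_mul _
  have hrho_nn : ∀ u : ℝ × ℝ, 0 ≤ rho v1 v2 u := fun u =>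
    add_nonneg (Real.rpow_nonneg (abs_nonneg _) _) (Real.rpow_nonneg (abs_nonneg _) _)
  -- measurability
  have hmeasf : AEStronglyMeasurable (fun u : ℝ × ℝ =>
      ‖(1 : ℂ) - Complex.exp (Complex.I * (u.1 : ℂ) * (x1 : ℂ))‖ ^ 2 *
        ‖(1 : ℂ) - Complex.exp (Complex.I * (u.2 : ℂ) * (x2 : ℂ))‖ ^ 2 /
          (u.1 ^ 2 * u.2 ^ 2) * (|L u| / rho v1 v2 u)) volume := by
    have hn1 : Continuous (fun u : ℝ × ℝ =>
        ‖(1 : ℂ) - Complex.exp (Complex.I * (u.1 : ℂ) * (x1 : ℂ))‖ ^ 2) := by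
      fun_prop
    have hn2 : Continuous (fun u : ℝ × ℝ =>
        ‖(1 : ℂ) - Complex.exp (Complex.I * (u.2 : ℂ) * (x2 : ℂ))‖ ^ 2) := by
      fun_prop
    have hd : Continuous (fun u : ℝ × ℝ => u.1 ^ 2 * u.2 ^ 2) := by fun_prop
    have hrho : Measurable (rho v1 v2) := by
      unfold rho
      exact (((Real.continuous_rpow_const hv1.le).comp
        (continuous_abs.comp continuous_fst)).add
        ((Real.continuous_rpow_const hv2.le).comp
        (continuous_abs.comp continuous_snd))).measurable
    exact ((((hn1.mul hn2).measurable).div hd.measurable).mul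
      (hLmeas.abs.div hrho)).aestronglyMeasurable
  refine hF.mono' hmeasf ?_
  filter_upwards with u
  have hfnn : 0 ≤ ‖(1 : ℂ) - Complex.exp (Complex.I * (u.1 : ℂ) * (x1 : ℂ))‖ ^ 2 *
      ‖(1 : ℂ) - Complex.exp (Complex.I * (u.2 : ℂ) * (x2 : ℂ))‖ ^ 2 /
        (u.1 ^ 2 * u.2 ^ 2) * (|L u| / rho v1 v2 u) :=
    mul_nonneg (by positivity) (div_nonneg (abs_nonneg _) (hrho_nn u))
  rw [Real.norm_of_nonneg hfnn]
  have hFnn : 0 ≤ 16 * C' * (g1 u.1 * g2 u.2) :=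
    mul_nonneg (by positivity) (mul_nonneg (hg1nn _) (hg2nn _))
  by_cases h1 : u.1 = 0
  · rw [h1]
    simp only [ne_eq, OfNat.ofNat_ne_zero, not_false_eq_true, zero_pow, zero_mul, div_zero,
      zero_mul, hg1def, hg2def]
    positivity
  by_cases h2 : u.2 = 0
  · rw [h2]
    simp only [ne_eq, OfNat.ofNat_ne_zero, not_false_eq_true, zero_pow, mul_zero, zero_mul,
      div_zero, hg1def, hg2def]
    positivity
  -- main case
  have hu1sq : (0 : ℝ) < u.1 ^ 2 := by positivity
  have hu2sq : (0 : ℝ) < u.2 ^ 2 := by positivity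
  have hp1 : (0 : ℝ) < |u.1| ^ c := Real.rpow_pos_of_pos (abs_pos.2 h1) c
  have hp2 : (0 : ℝ) < |u.2| ^ c := Real.rpow_pos_of_pos (abs_pos.2 h2) c
  have hune : u ≠ 0 := fun h => h1 (by rw [h]; rfl)
  have hL : |L u| ≤ C' := hC' u hune
  have hPle : |u.1| ^ c * |u.2| ^ c ≤ rho v1 v2 u := key u.1 u.2
  have A1 := norm_sq_one_sub_exp_le u.1 x1
  have A2 := norm_sq_one_sub_exp_le u.2 x2
  calc ‖(1 : ℂ) - Complex.exp (Complex.I * (u.1 : ℂ) * (x1 : ℂ))‖ ^ 2 *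
      ‖(1 : ℂ) - Complex.exp (Complex.I * (u.2 : ℂ) * (x2 : ℂ))‖ ^ 2 /
        (u.1 ^ 2 * u.2 ^ 2) * (|L u| / rho v1 v2 u)
      ≤ 4 * min 1 (u.1 ^ 2 * x1 ^ 2) * (4 * min 1 (u.2 ^ 2 * x2 ^ 2)) /
        (u.1 ^ 2 * u.2 ^ 2) * (C' / (|u.1| ^ c * |u.2| ^ c)) := by
        apply mul_le_mul
        · gcongr
        · exact div_le_div₀ hC'0 hL (mul_pos hp1 hp2) hPle
        · exact div_nonneg (abs_nonneg _) (hrho_nn u)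
        · positivity
    _ = 16 * C' * (g1 u.1 * g2 u.2) := by
        simp only [hg1def, hg2def]
        ring
end
end

section
/- Let υ1, υ2 ∈ (0,1), let ρ(u1,u2) = |u1|^{υ1} + |u2|^{υ2}, and let L : ℝ²∖{(0,0)} → ℝ be a bounded measurable function. Then for all x1, x2 > 0 the function u = (u1,u2) ↦ |1−e^{i u1 x1}|² · |1−e^{i u2 x2}|² · u1^{−2} · u2^{−2} · |L(u)|·ρ(u) is integrable on ℝ². (This establishes the existence of the well-balanced Gaussian limit field V_{0,ρ} defined by the spectral integral with density L·ρ.) -/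
open MeasureTheory Real Filter Topology

noncomputable section

lemma normsq_one_sub_exp (θ : ℝ) :
    ‖(1:ℂ) - Complex.exp (Complex.I * θ)‖ ^ 2 = 2 - 2 * Real.cos θ := by
  rw [show Complex.I * θ = (θ:ℂ) * Complex.I by ring, Complex.exp_mul_I,
    Complex.sq_norm, Complex.normSq_apply]
  simp [Complex.cos_ofReal_re, Complex.sin_ofReal_re]
  nlinarith [Real.sin_sq_add_cos_sq θ]

lemma aux1 (v x : ℝ) (hv0 : 0 ≤ v) (hv1 : v < 1) :
    Integrable (fun t : ℝ => ‖(1:ℂ) - Complex.exp (Complex.I * t * x)‖ ^ 2 / t ^ 2 * |t| ^ v) := by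
  set f : ℝ → ℝ := fun t => ‖(1:ℂ) - Complex.exp (Complex.I * t * x)‖ ^ 2 / t ^ 2 * |t| ^ v with hf
  have hfeq : ∀ t, f t = (2 - 2 * Real.cos (t * x)) / t ^ 2 * |t| ^ v := by
    intro t
    have h1 : Complex.I * t * x = Complex.I * ((t * x : ℝ) : ℂ) := by push_cast; ring
    simp only [hf, h1, normsq_one_sub_exp]
  have hfnonneg : ∀ t, 0 ≤ f t := by
    intro t
    rw [hfeq]
    apply mul_nonneg (div_nonneg (by nlinarith [Real.cos_le_one (t*x)]) (sq_nonneg t))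
      (rpow_nonneg (abs_nonneg t) v)
  have hmeas : AEStronglyMeasurable f volume := by
    apply Measurable.aestronglyMeasurable
    fun_prop
  have key : ∀ t : ℝ, 0 < t → f t ≤ min (x ^ 2) (4 / t ^ 2) * t ^ v := by
    intro t ht
    rw [hfeq, abs_of_pos ht]
    have h2 : (2 - 2 * Real.cos (t * x)) / t ^ 2 ≤ min (x ^ 2) (4 / t ^ 2) := by
      rw [le_min_iff, div_le_iff₀ (by positivity), div_le_iff₀ (by positivity)]
      constructor
      · nlinarith [Real.one_sub_sq_div_two_le_cos (x := t * x)]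
      · rw [div_mul_cancel₀ _ (by positivity : (t:ℝ)^2 ≠ 0)]
        nlinarith [Real.neg_one_le_cos (t * x)]
    exact mul_le_mul_of_nonneg_right h2 (rpow_nonneg ht.le v)
  have hIoi : IntegrableOn f (Set.Ioc 0 1 ∪ Set.Ioi 1) := by
    rw [integrableOn_union]
    constructor
    · apply Integrable.mono' (g := fun _ => x ^ 2)
        (integrableOn_const measure_Ioc_lt_top.ne) hmeas.restrict
      filter_upwards [ae_restrict_mem measurableSet_Ioc] with t ht
      rw [Real.norm_eq_abs, abs_of_nonneg (hfnonneg t)]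
      calc f t ≤ min (x ^ 2) (4 / t ^ 2) * t ^ v := key t ht.1
        _ ≤ x ^ 2 * 1 := by
            apply mul_le_mul (min_le_left _ _) (rpow_le_one ht.1.le ht.2 hv0)
              (rpow_nonneg ht.1.le v) (sq_nonneg x)
        _ = x ^ 2 := mul_one _
    · apply Integrable.mono' (g := fun t => 4 * t ^ (v - 2))
        ((integrableOn_Ioi_rpow_of_lt (by linarith) one_pos).const_mul 4) hmeas.restrict
      filter_upwards [ae_restrict_mem measurableSet_Ioi] with t ht
      have ht0 : (0:ℝ) < t := lt_trans one_pos ht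
      rw [Real.norm_eq_abs, abs_of_nonneg (hfnonneg t)]
      calc f t ≤ min (x ^ 2) (4 / t ^ 2) * t ^ v := key t ht0
        _ ≤ 4 / t ^ 2 * t ^ v := mul_le_mul_of_nonneg_right (min_le_right _ _) (rpow_nonneg ht0.le v)
        _ = 4 * t ^ (v - 2) := by
            rw [rpow_sub ht0, rpow_two]
            ring
  rw [Set.Ioc_union_Ioi_eq_Ioi zero_le_one] at hIoi
  have heven : ∀ t : ℝ, f (-t) = f t := by
    intro t
    rw [hfeq, hfeq]
    simp [Real.cos_neg, neg_mul]
  rw [← integrableOn_univ, ← @Set.Iio_union_Ici _ _ (0 : ℝ), integrableOn_union,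
    integrableOn_Ici_iff_integrableOn_Ioi]
  refine ⟨?_, hIoi⟩
  rw [← (Measure.measurePreserving_neg (volume : Measure ℝ)).integrableOn_comp_preimage
      (Homeomorph.neg ℝ).measurableEmbedding]
  simp only [Function.comp_def, Set.neg_preimage, Set.neg_Iio, neg_neg, neg_zero]
  exact hIoi.congr_fun (fun t _ => (heven t).symm) measurableSet_Ioi

theorem stmt10 (v1 v2 : ℝ) (hv1 : v1 ∈ Set.Ioo (0 : ℝ) 1) (hv2 : v2 ∈ Set.Ioo (0 : ℝ) 1)
    (L : ℝ × ℝ → ℝ) (hLmeas : Measurable L)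
    (hLbdd : ∃ C : ℝ, ∀ x : ℝ × ℝ, x ≠ 0 → |L x| ≤ C)
    (x1 x2 : ℝ) (hx1 : 0 < x1) (hx2 : 0 < x2) :
    Integrable (fun u : ℝ × ℝ =>
      ‖(1 : ℂ) - Complex.exp (Complex.I * (u.1 : ℂ) * (x1 : ℂ))‖ ^ 2 *
        ‖(1 : ℂ) - Complex.exp (Complex.I * (u.2 : ℂ) * (x2 : ℂ))‖ ^ 2 /
          (u.1 ^ 2 * u.2 ^ 2) * (|L u| * rho v1 v2 u)) := by
  obtain ⟨C, hC⟩ := hLbdd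
  have hC0 : 0 ≤ C := le_trans (abs_nonneg _) (hC (1, 1) (by simp [Prod.ext_iff]))
  set f1 : ℝ → ℝ := fun t => ‖(1:ℂ) - Complex.exp (Complex.I * t * x1)‖ ^ 2 / t ^ 2 * |t| ^ v1
    with hf1def
  set g1 : ℝ → ℝ := fun t => ‖(1:ℂ) - Complex.exp (Complex.I * t * x1)‖ ^ 2 / t ^ 2 with hg1def
  set f2 : ℝ → ℝ := fun t => ‖(1:ℂ) - Complex.exp (Complex.I * t * x2)‖ ^ 2 / t ^ 2 * |t| ^ v2
    with hf2def
  set g2 : ℝ → ℝ := fun t => ‖(1:ℂ) - Complex.exp (Complex.I * t * x2)‖ ^ 2 / t ^ 2 with hg2def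
  have hf1 : Integrable f1 := aux1 v1 x1 hv1.1.le hv1.2
  have hf2 : Integrable f2 := aux1 v2 x2 hv2.1.le hv2.2
  have hg1 : Integrable g1 := by
    have := aux1 0 x1 le_rfl one_pos
    simpa [Real.rpow_zero] using this
  have hg2 : Integrable g2 := by
    have := aux1 0 x2 le_rfl one_pos
    simpa [Real.rpow_zero] using this
  have hG : Integrable (fun u : ℝ × ℝ => C * (f1 u.1 * g2 u.2 + g1 u.1 * f2 u.2)) := by
    have h1 : Integrable (fun u : ℝ × ℝ => f1 u.1 * g2 u.2) := by
      rw [MeasureTheory.Measure.volume_eq_prod]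
      exact hf1.mul_prod hg2
    have h2 : Integrable (fun u : ℝ × ℝ => g1 u.1 * f2 u.2) := by
      rw [MeasureTheory.Measure.volume_eq_prod]
      exact hg1.mul_prod hf2
    exact (h1.add h2).const_mul C
  apply hG.mono'
  · apply Measurable.aestronglyMeasurable
    unfold rho
    fun_prop
  · have hnonneg : ∀ t : ℝ, ∀ x : ℝ, (0:ℝ) ≤ ‖(1:ℂ) - Complex.exp (Complex.I * t * x)‖ ^ 2 / t ^ 2 :=
      fun t x => div_nonneg (sq_nonneg _) (sq_nonneg _)
    filter_upwards with u
    rw [Real.norm_eq_abs, abs_of_nonneg]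
    · by_cases hu : u = 0
      · subst hu
        simp only [Prod.fst_zero, Prod.snd_zero, Complex.ofReal_zero, mul_zero, zero_mul,
          Complex.exp_zero, sub_self, norm_zero]
        have : (0:ℝ) ^ 2 * (0:ℝ) ^ 2 = 0 := by norm_num
        rw [this]
        simp only [ne_eq, OfNat.ofNat_ne_zero, not_false_eq_true, zero_pow, zero_mul, div_zero]
        positivity
      · have hrw : ‖(1 : ℂ) - Complex.exp (Complex.I * (u.1 : ℂ) * (x1 : ℂ))‖ ^ 2 *
            ‖(1 : ℂ) - Complex.exp (Complex.I * (u.2 : ℂ) * (x2 : ℂ))‖ ^ 2 /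
              (u.1 ^ 2 * u.2 ^ 2) * (|L u| * rho v1 v2 u) =
            |L u| * (f1 u.1 * g2 u.2 + g1 u.1 * f2 u.2) := by
          simp only [hf1def, hf2def, hg1def, hg2def, rho]
          ring
        rw [hrw]
        apply mul_le_mul_of_nonneg_right (hC u hu)
        have := hnonneg u.1 x1
        have := hnonneg u.2 x2
        positivity
    · have := hnonneg u.1 x1
      have := hnonneg u.2 x2
      have h3 : (0:ℝ) ≤ rho v1 v2 u := by
        unfold rho
        positivity
      positivity
end
end

section
/- For all x, y > 0, as T → ∞, (log T)^{-1} · ∫_0^T Re[(1−e^{i x u})(1−e^{−i y u})] · u^{−1} du converges to 2 if x = y and to 1 if x ≠ y. Equivalently, (log T)^{-1} · ∫_0^T (1 − cos(x u) − cos(y u) + cos((x−y)u)) · u^{−1} du → 1 + 𝟙{x = y}. (The integrand is O(u) near u = 0, so the integral is well defined.) -/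
open MeasureTheory Real Filter Topology Set intervalIntegral

noncomputable section

lemma abs_one_sub_cos_le (t : ℝ) : |1 - Real.cos t| ≤ |t| := by
  have h : 1 - Real.cos t = 2 * Real.sin (t/2) ^ 2 := by
    have := Real.cos_two_mul' (t/2)
    have h2 : Real.cos t = Real.cos (2 * (t/2)) := by ring_nf
    rw [h2, this, Real.cos_sq' (t/2)]
    ring
  rw [h]
  have h1 : |Real.sin (t/2)| ≤ 1 := Real.abs_sin_le_one (t/2)
  have h2 : |Real.sin (t/2)| ≤ |t/2| := Real.abs_sin_le_abs
  calc |2 * Real.sin (t/2) ^ 2| = 2 * (|Real.sin (t/2)| * |Real.sin (t/2)|) := by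
        rw [abs_mul, sq, abs_mul]; simp [abs_of_nonneg]
    _ ≤ 2 * (1 * |t/2|) := by
        apply mul_le_mul_of_nonneg_left (mul_le_mul h1 h2 (abs_nonneg _) zero_le_one) (by norm_num)
    _ = |t| := by rw [one_mul, abs_div]; simp; ring

lemma meas_f (a : ℝ) : Measurable (fun u : ℝ => (1 - Real.cos (a*u))/u) :=
  (measurable_const.sub ((Real.continuous_cos.comp (continuous_const.mul continuous_id)).measurable)).div measurable_id

lemma intInt_f (a : ℝ) {b c : ℝ} (hb : 0 ≤ b) (hc : 0 ≤ c) :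
    IntervalIntegrable (fun u : ℝ => (1 - Real.cos (a*u))/u) volume b c := by
  rw [intervalIntegrable_iff]
  apply MeasureTheory.Measure.integrableOn_of_bounded (M := |a|)
  · exact (measure_mono Set.uIoc_subset_uIcc).trans_lt measure_Icc_lt_top |>.ne
  · exact (meas_f a).aestronglyMeasurable
  · filter_upwards [MeasureTheory.ae_restrict_mem measurableSet_uIoc] with u hu
    have hu0 : 0 < u := by
      rcases Set.mem_uIoc.1 hu with h | h
      · exact lt_of_le_of_lt hb h.1
      · exact lt_of_le_of_lt hc h.1
    rw [Real.norm_eq_abs, abs_div, abs_of_pos hu0, div_le_iff₀ hu0]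
    calc |1 - Real.cos (a*u)| ≤ |a*u| := abs_one_sub_cos_le _
      _ = |a| * u := by rw [abs_mul, abs_of_pos hu0]

lemma osc_bound {a : ℝ} (ha : 0 < a) {T : ℝ} (hT : 1 ≤ T) :
    |∫ t in (1:ℝ)..T, t⁻¹ * Real.cos (a*t)| ≤ 3/a := by
  have hIcc : Set.uIcc (1:ℝ) T = Set.Icc 1 T := Set.uIcc_of_le hT
  have hne : ∀ t ∈ Set.uIcc (1:ℝ) T, t ≠ 0 := by
    intro t ht; rw [hIcc] at ht; linarith [ht.1]
  have hu : ∀ t ∈ Set.uIcc (1:ℝ) T, HasDerivAt (fun x : ℝ => x⁻¹) (-((t:ℝ)^2)⁻¹) t :=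
    fun t ht => hasDerivAt_inv (hne t ht)
  have hv : ∀ t ∈ Set.uIcc (1:ℝ) T, HasDerivAt (fun x : ℝ => Real.sin (a*x)/a) (Real.cos (a*t)) t := by
    intro t _
    have h1 : HasDerivAt (fun x : ℝ => Real.sin (a*x)) (Real.cos (a*t) * a) t := by
      simpa [Function.comp_def] using (Real.hasDerivAt_sin (a*t)).comp t ((hasDerivAt_id t).const_mul a)
    simpa [mul_div_assoc, div_self ha.ne'] using h1.div_const a
  have hu' : IntervalIntegrable (fun t : ℝ => -((t:ℝ)^2)⁻¹) volume 1 T := by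
    apply ContinuousOn.intervalIntegrable
    exact (continuousOn_inv₀.comp (continuousOn_pow 2) (fun t ht => pow_ne_zero 2 (hne t ht))).neg
  have hv' : IntervalIntegrable (fun t : ℝ => Real.cos (a*t)) volume 1 T :=
    (Real.continuous_cos.comp (continuous_const.mul continuous_id)).continuousOn.intervalIntegrable
  have hparts := intervalIntegral.integral_mul_deriv_eq_deriv_mul hu hv hu' hv'
  rw [hparts]
  have hbsin : ∀ s : ℝ, |Real.sin s / a| ≤ 1/a := by
    intro s
    rw [abs_div, abs_of_pos ha]
    exact div_le_div_of_nonneg_right (Real.abs_sin_le_one s) ha.le |>.trans_eq rfl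
  have hI3 : |∫ t in (1:ℝ)..T, -((t:ℝ)^2)⁻¹ * (Real.sin (a*t)/a)| ≤ 1/a := by
    calc |∫ t in (1:ℝ)..T, -((t:ℝ)^2)⁻¹ * (Real.sin (a*t)/a)|
        ≤ ∫ t in (1:ℝ)..T, |(-((t:ℝ)^2)⁻¹ * (Real.sin (a*t)/a))| :=
          intervalIntegral.abs_integral_le_integral_abs hT
      _ ≤ ∫ t in (1:ℝ)..T, ((t:ℝ)^2)⁻¹ * (1/a) := by
          apply intervalIntegral.integral_mono_on hT
          · apply ContinuousOn.intervalIntegrable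
            apply ContinuousOn.abs
            apply ContinuousOn.mul
            · exact (continuousOn_inv₀.comp (continuousOn_pow 2)
                (fun t ht => pow_ne_zero 2 (hne t ht))).neg
            · exact ((Real.continuous_sin.comp (continuous_const.mul continuous_id)).continuousOn).div_const a
          · apply ContinuousOn.intervalIntegrable
            exact (continuousOn_inv₀.comp (continuousOn_pow 2)
                (fun t ht => pow_ne_zero 2 (hne t ht))).mul continuousOn_const
          · intro t ht
            rw [abs_mul, abs_neg, abs_inv, abs_pow]
            have ht1 : (1:ℝ) ≤ t := ht.1
            have : |t| = t := abs_of_pos (by linarith)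
            rw [this]
            exact mul_le_mul_of_nonneg_left (hbsin (a*t)) (by positivity)
      _ = (∫ t in (1:ℝ)..T, ((t:ℝ)^2)⁻¹) * (1/a) := by
          rw [← intervalIntegral.integral_mul_const]
      _ ≤ 1 * (1/a) := by
          apply mul_le_mul_of_nonneg_right _ (by positivity)
          have : (∫ t in (1:ℝ)..T, ((t:ℝ)^2)⁻¹) = -T⁻¹ - -1⁻¹ := by
            apply intervalIntegral.integral_eq_sub_of_hasDerivAt
            · intro t ht
              have h := (hasDerivAt_inv (hne t ht)).neg; rw [neg_neg] at h; exact h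
            · apply ContinuousOn.intervalIntegrable
              exact continuousOn_inv₀.comp (continuousOn_pow 2)
                (fun t ht => pow_ne_zero 2 (hne t ht))
          rw [this]
          have : (0:ℝ) < T⁻¹ := by positivity
          norm_num; linarith
      _ = 1/a := one_mul _
  have h1T : |T⁻¹ * (Real.sin (a*T)/a)| ≤ 1/a := by
    rw [abs_mul]
    calc |T⁻¹| * |Real.sin (a*T)/a| ≤ 1 * (1/a) := by
          apply mul_le_mul _ (hbsin _) (abs_nonneg _) zero_le_one
          rw [abs_inv, abs_of_pos (by linarith : (0:ℝ) < T)]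
          exact inv_le_one_of_one_le₀ hT
      _ = 1/a := one_mul _
  have h11 : |(1:ℝ)⁻¹ * (Real.sin (a*1)/a)| ≤ 1/a := by
    rw [abs_mul]
    simpa using hbsin (a*1)
  calc |T⁻¹ * (Real.sin (a*T)/a) - 1⁻¹ * (Real.sin (a*1)/a)
        - ∫ t in (1:ℝ)..T, -((t:ℝ)^2)⁻¹ * (Real.sin (a*t)/a)|
      ≤ |T⁻¹ * (Real.sin (a*T)/a) - 1⁻¹ * (Real.sin (a*1)/a)|
        + |∫ t in (1:ℝ)..T, -((t:ℝ)^2)⁻¹ * (Real.sin (a*t)/a)| := abs_sub _ _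
    _ ≤ (|T⁻¹ * (Real.sin (a*T)/a)| + |(1:ℝ)⁻¹ * (Real.sin (a*1)/a)|) + 1/a := by
        exact add_le_add (abs_sub _ _) hI3
    _ ≤ (1/a + 1/a) + 1/a := by exact add_le_add (add_le_add h1T h11) le_rfl
    _ = 3/a := by ring

lemma key {a : ℝ} (ha : 0 < a) :
    Tendsto (fun T : ℝ => (Real.log T)⁻¹ * ∫ u in (0:ℝ)..T, (1 - Real.cos (a*u))/u)
      atTop (𝓝 1) := by
  set C := ∫ u in (0:ℝ)..1, (1 - Real.cos (a*u))/u with hC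
  have hg0 : Tendsto
      (fun T : ℝ => (Real.log T)⁻¹ * (C - ∫ t in (1:ℝ)..T, t⁻¹ * Real.cos (a*t)))
      atTop (𝓝 0) := by
    apply Filter.Tendsto.zero_mul_isBoundedUnder_le
    · exact Real.tendsto_log_atTop.inv_tendsto_atTop
    · apply Filter.isBoundedUnder_of_eventually_le (a := |C| + 3/a)
      filter_upwards [eventually_ge_atTop (1:ℝ)] with T hT
      calc ‖C - ∫ t in (1:ℝ)..T, t⁻¹ * Real.cos (a*t)‖
          ≤ |C| + |∫ t in (1:ℝ)..T, t⁻¹ * Real.cos (a*t)| := abs_sub _ _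
        _ ≤ |C| + 3/a := add_le_add le_rfl (osc_bound ha hT)
  have heq : ∀ᶠ T : ℝ in atTop,
      1 + (Real.log T)⁻¹ * (C - ∫ t in (1:ℝ)..T, t⁻¹ * Real.cos (a*t))
      = (Real.log T)⁻¹ * ∫ u in (0:ℝ)..T, (1 - Real.cos (a*u))/u := by
    filter_upwards [eventually_ge_atTop (2:ℝ)] with T hT
    have hT1 : (1:ℝ) ≤ T := by linarith
    have hlog : Real.log T ≠ 0 := ne_of_gt (Real.log_pos (by linarith))
    have hne0 : (0:ℝ) ∉ Set.uIcc (1:ℝ) T := by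
      rw [Set.uIcc_of_le hT1]
      intro h; exact absurd h.1 (by norm_num)
    have hint1 : IntervalIntegrable (fun u : ℝ => u⁻¹) volume 1 T := by
      apply ContinuousOn.intervalIntegrable
      exact continuousOn_inv₀.mono (fun u hu h0 => hne0 (h0 ▸ hu))
    have hint2 : IntervalIntegrable (fun u : ℝ => u⁻¹ * Real.cos (a*u)) volume 1 T := by
      apply ContinuousOn.intervalIntegrable
      exact (continuousOn_inv₀.mono (fun u hu h0 => hne0 (h0 ▸ hu))).mul
        (Real.continuous_cos.comp (continuous_const.mul continuous_id)).continuousOn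
    have hsplit : ∫ u in (0:ℝ)..T, (1 - Real.cos (a*u))/u
        = C + ∫ u in (1:ℝ)..T, (1 - Real.cos (a*u))/u := by
      rw [hC]
      exact (intervalIntegral.integral_add_adjacent_intervals
        (intInt_f a le_rfl zero_le_one) (intInt_f a zero_le_one (by linarith))).symm
    have h2 : ∫ u in (1:ℝ)..T, (1 - Real.cos (a*u))/u
        = Real.log T - ∫ t in (1:ℝ)..T, t⁻¹ * Real.cos (a*t) := by
      have hpt : ∀ u : ℝ, (1 - Real.cos (a*u))/u = u⁻¹ - u⁻¹ * Real.cos (a*u) := by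
        intro u; rw [sub_div, div_eq_mul_inv, div_eq_mul_inv]; ring
      rw [intervalIntegral.integral_congr (g := fun u : ℝ => u⁻¹ - u⁻¹ * Real.cos (a*u))
        (fun u _ => hpt u)]
      rw [intervalIntegral.integral_sub hint1 hint2, integral_inv hne0, div_one]
    rw [hsplit, h2]
    have : (Real.log T)⁻¹ * (C + (Real.log T - ∫ t in (1:ℝ)..T, t⁻¹ * Real.cos (a*t)))
        = (Real.log T)⁻¹ * Real.log T
          + (Real.log T)⁻¹ * (C - ∫ t in (1:ℝ)..T, t⁻¹ * Real.cos (a*t)) := by ring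
    rw [this, inv_mul_cancel₀ hlog]
  have hfin : Tendsto
      (fun T : ℝ => 1 + (Real.log T)⁻¹ * (C - ∫ t in (1:ℝ)..T, t⁻¹ * Real.cos (a*t)))
      atTop (𝓝 (1 + 0)) := (tendsto_const_nhds (x := (1:ℝ))).add hg0
  rw [add_zero] at hfin
  exact hfin.congr' heq

lemma key' (a : ℝ) :
    Tendsto (fun T : ℝ => (Real.log T)⁻¹ * ∫ u in (0:ℝ)..T, (1 - Real.cos (a*u))/u)
      atTop (𝓝 (if a = 0 then 0 else 1)) := by
  rcases lt_trichotomy a 0 with h | h | h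
  · rw [if_neg h.ne]
    have : (fun u : ℝ => (1 - Real.cos (a*u))/u) = fun u : ℝ => (1 - Real.cos ((-a)*u))/u := by
      funext u; rw [neg_mul, Real.cos_neg]
    simpa [this] using key (neg_pos.2 h)
  · subst h
    simp only [if_pos rfl, zero_mul, Real.cos_zero, sub_self, zero_div,
      intervalIntegral.integral_zero, mul_zero]
    exact tendsto_const_nhds
  · rw [if_neg h.ne']
    exact key h

theorem stmt15 (x y : ℝ) (hx : 0 < x) (hy : 0 < y) :
    Filter.Tendsto
      (fun T : ℝ => (Real.log T)⁻¹ *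
        ∫ u in (0 : ℝ)..T,
          ((1 - Complex.exp (Complex.I * (x : ℂ) * (u : ℂ))) *
            (1 - Complex.exp (-Complex.I * (y : ℂ) * (u : ℂ)))).re / u)
      Filter.atTop
      (𝓝 (if x = y then (2 : ℝ) else 1)) := by
  have hpt : ∀ u : ℝ,
      ((1 - Complex.exp (Complex.I * (x : ℂ) * (u : ℂ))) *
        (1 - Complex.exp (-Complex.I * (y : ℂ) * (u : ℂ)))).re / u
      = (1 - Real.cos (x*u))/u + (1 - Real.cos (y*u))/u - (1 - Real.cos ((x-y)*u))/u := by
    intro u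
    have h1 : ((1 - Complex.exp (Complex.I * (x:ℂ) * (u:ℂ))) *
        (1 - Complex.exp (-Complex.I * (y:ℂ) * (u:ℂ)))).re
        = (1 - Real.cos (x*u)) + (1 - Real.cos (y*u)) - (1 - Real.cos ((x-y)*u)) := by
      simp [Complex.mul_re, Complex.sub_re, Complex.sub_im, Complex.exp_re, Complex.exp_im,
        Complex.mul_im, Complex.I_re, Complex.I_im, Complex.ofReal_re, Complex.ofReal_im,
        Real.cos_sub, sub_mul]
      ring
    rw [h1, sub_div, add_div]
  have hlim : Tendsto (fun T : ℝ =>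
      ((Real.log T)⁻¹ * ∫ u in (0:ℝ)..T, (1 - Real.cos (x*u))/u)
      + ((Real.log T)⁻¹ * ∫ u in (0:ℝ)..T, (1 - Real.cos (y*u))/u)
      - ((Real.log T)⁻¹ * ∫ u in (0:ℝ)..T, (1 - Real.cos ((x-y)*u))/u))
      atTop (𝓝 (if x = y then (2:ℝ) else 1)) := by
    have := ((key hx).add (key hy)).sub (key' (x - y))
    by_cases hxy : x = y
    · rw [if_pos hxy]
      have h0 : x - y = 0 := by rw [hxy]; ring
      simpa [h0, one_add_one_eq_two] using this
    · rw [if_neg hxy]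
      have h0 : x - y ≠ 0 := sub_ne_zero.2 hxy
      have : ((1:ℝ) + 1) - 1 = 1 := by norm_num
      simpa [h0, this] using ((key hx).add (key hy)).sub (key' (x - y))
  apply hlim.congr'
  filter_upwards [eventually_ge_atTop (0:ℝ)] with T hT
  have hi1 := intInt_f x (le_refl (0:ℝ)) hT
  have hi2 := intInt_f y (le_refl (0:ℝ)) hT
  have hi3 := intInt_f (x - y) (le_refl (0:ℝ)) hT
  rw [intervalIntegral.integral_congr (g := fun u : ℝ =>
      (1 - Real.cos (x*u))/u + (1 - Real.cos (y*u))/u - (1 - Real.cos ((x-y)*u))/u)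
      (fun u _ => hpt u)]
  rw [intervalIntegral.integral_sub (hi1.add hi2) hi3, intervalIntegral.integral_add hi1 hi2]
  ring
end
end

section
/- Let υ1, υ2 > 0, ρ(x1,x2) = |x1|^{υ1} + |x2|^{υ2}, Υ = 1/υ1 + 1/υ2, and let δ > 0 and w > 0. Then ∫_{{x ∈ ℝ² : |x1|+|x2| < δ}} ρ(x)^{−w} dx < ∞ if and only if w < Υ. -/
open MeasureTheory Real Filter Topology

noncomputable section

namespace Stmt17Aux

open Set NNReal ENNReal

/-- Sublevel set of `rho`. -/
def slev (v1 v2 t : ℝ) : Set (ℝ × ℝ) := {x | rho v1 v2 x < t}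

lemma mem_slev {v1 v2 t : ℝ} {x : ℝ × ℝ} : x ∈ slev v1 v2 t ↔ rho v1 v2 x < t := Iff.rfl

lemma rho_nonneg (v1 v2 : ℝ) (x : ℝ × ℝ) : 0 ≤ rho v1 v2 x :=
  add_nonneg (Real.rpow_nonneg (abs_nonneg _) _) (Real.rpow_nonneg (abs_nonneg _) _)

lemma measurable_rho (v1 v2 : ℝ) : Measurable (rho v1 v2) := by
  unfold rho; fun_prop

lemma measurable_f (v1 v2 w : ℝ) : Measurable (fun x : ℝ × ℝ => rho v1 v2 x ^ (-w)) := by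
  unfold rho; fun_prop

lemma measurableSet_slev (v1 v2 t : ℝ) : MeasurableSet (slev v1 v2 t) :=
  measurableSet_lt (measurable_rho v1 v2) measurable_const

lemma rho_pos {v1 v2 : ℝ} {x : ℝ × ℝ} (hx : x ≠ 0) : 0 < rho v1 v2 x := by
  have h : x.1 ≠ 0 ∨ x.2 ≠ 0 := by
    by_contra h
    push_neg at h
    exact hx (Prod.ext h.1 h.2)
  rcases h with h | h
  · have h1 : 0 < |x.1| ^ v1 := Real.rpow_pos_of_pos (abs_pos.2 h) _
    have h2 : 0 ≤ |x.2| ^ v2 := Real.rpow_nonneg (abs_nonneg _) _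
    unfold rho; linarith
  · have h1 : 0 < |x.2| ^ v2 := Real.rpow_pos_of_pos (abs_pos.2 h) _
    have h2 : 0 ≤ |x.1| ^ v1 := Real.rpow_nonneg (abs_nonneg _) _
    unfold rho; linarith

lemma prod_smul (c d : ℝ≥0) :
    ((c • (volume : Measure ℝ)).prod (d • (volume : Measure ℝ)))
      = (c * d) • ((volume : Measure ℝ).prod (volume : Measure ℝ)) := by
  refine Measure.prod_eq fun s t hs ht => ?_
  simp only [Measure.smul_apply, Measure.prod_prod, ENNReal.smul_def, ENNReal.coe_mul, smul_eq_mul]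
  ring

lemma map_scaling {a b : ℝ} (ha : 0 < a) (hb : 0 < b) :
    Measure.map (fun x : ℝ × ℝ => (a * x.1, b * x.2)) (volume : Measure (ℝ × ℝ))
      = (ENNReal.ofReal (a⁻¹ * b⁻¹)) • (volume : Measure (ℝ × ℝ)) := by
  have hmap : (fun x : ℝ × ℝ => (a * x.1, b * x.2)) = Prod.map (a * ·) (b * ·) := rfl
  rw [hmap, Measure.volume_eq_prod,
    ← Measure.map_prod_map _ _ (measurable_const_mul a) (measurable_const_mul b),
    Real.map_volume_mul_left ha.ne', Real.map_volume_mul_left hb.ne']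
  have ea : ENNReal.ofReal |a⁻¹| • (volume : Measure ℝ) = (|a⁻¹|).toNNReal • volume := by
    rw [ENNReal.smul_def]; rfl
  have eb : ENNReal.ofReal |b⁻¹| • (volume : Measure ℝ) = (|b⁻¹|).toNNReal • volume := by
    rw [ENNReal.smul_def]; rfl
  rw [ea, eb, prod_smul, ENNReal.smul_def, ← Measure.volume_eq_prod]
  congr 1
  rw [ENNReal.coe_mul, abs_of_pos (inv_pos.2 ha), abs_of_pos (inv_pos.2 hb),
    ENNReal.ofReal_mul (inv_pos.2 ha).le]
  rfl

lemma rpow_one_div_self {t c : ℝ} (ht : 0 < t) (hc : 0 < c) : (t ^ (1 / c)) ^ c = t := by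
  rw [← Real.rpow_mul ht.le, one_div, inv_mul_cancel₀ hc.ne', Real.rpow_one]

lemma volume_slev {v1 v2 : ℝ} (hv1 : 0 < v1) (hv2 : 0 < v2) {t : ℝ} (ht : 0 < t) :
    volume (slev v1 v2 t)
      = ENNReal.ofReal (t ^ (1 / v1 + 1 / v2)) * volume (slev v1 v2 1) := by
  set a := t ^ (1 / v1) with ha_def
  set b := t ^ (1 / v2) with hb_def
  have ha : 0 < a := Real.rpow_pos_of_pos ht _
  have hb : 0 < b := Real.rpow_pos_of_pos ht _
  have hpre : (fun x : ℝ × ℝ => (a * x.1, b * x.2)) ⁻¹' (slev v1 v2 t) = slev v1 v2 1 := by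
    ext x
    simp only [mem_preimage, mem_slev, rho]
    have e1 : |a * x.1| ^ v1 = t * |x.1| ^ v1 := by
      rw [abs_mul, abs_of_pos ha, Real.mul_rpow ha.le (abs_nonneg _),
        rpow_one_div_self ht hv1]
    have e2 : |b * x.2| ^ v2 = t * |x.2| ^ v2 := by
      rw [abs_mul, abs_of_pos hb, Real.mul_rpow hb.le (abs_nonneg _),
        rpow_one_div_self ht hv2]
    rw [e1, e2, ← mul_add]
    exact mul_lt_iff_lt_one_right ht
  have hmeas : Measurable (fun x : ℝ × ℝ => (a * x.1, b * x.2)) := by fun_prop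
  have h1 : volume (slev v1 v2 1)
      = ENNReal.ofReal (a⁻¹ * b⁻¹) * volume (slev v1 v2 t) := by
    calc volume (slev v1 v2 1)
        = volume ((fun x : ℝ × ℝ => (a * x.1, b * x.2)) ⁻¹' (slev v1 v2 t)) := by rw [hpre]
      _ = Measure.map (fun x : ℝ × ℝ => (a * x.1, b * x.2)) volume (slev v1 v2 t) :=
          (Measure.map_apply hmeas (measurableSet_slev v1 v2 t)).symm
      _ = ENNReal.ofReal (a⁻¹ * b⁻¹) * volume (slev v1 v2 t) := by
          rw [map_scaling ha hb, Measure.smul_apply, smul_eq_mul]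
  have hab : a * b = t ^ (1 / v1 + 1 / v2) := (Real.rpow_add ht _ _).symm
  calc volume (slev v1 v2 t)
      = (ENNReal.ofReal (a * b) * ENNReal.ofReal (a⁻¹ * b⁻¹)) * volume (slev v1 v2 t) := by
        rw [← ENNReal.ofReal_mul (mul_pos ha hb).le]
        rw [show a * b * (a⁻¹ * b⁻¹) = (a * a⁻¹) * (b * b⁻¹) by ring,
          mul_inv_cancel₀ ha.ne', mul_inv_cancel₀ hb.ne', one_mul, ENNReal.ofReal_one, one_mul]
    _ = ENNReal.ofReal (a * b) * volume (slev v1 v2 1) := by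
        rw [mul_assoc, ← h1]
    _ = ENNReal.ofReal (t ^ (1 / v1 + 1 / v2)) * volume (slev v1 v2 1) := by rw [hab]

lemma slev_subset_box {v1 v2 : ℝ} (hv1 : 0 < v1) (hv2 : 0 < v2) {t : ℝ} (ht : 0 < t) :
    slev v1 v2 t ⊆ Ioo (-(t ^ (1/v1) + t ^ (1/v2))) (t ^ (1/v1) + t ^ (1/v2)) ×ˢ
      Ioo (-(t ^ (1/v1) + t ^ (1/v2))) (t ^ (1/v1) + t ^ (1/v2)) := by
  intro x hx
  rw [mem_slev, rho] at hx
  set R := t ^ (1/v1) + t ^ (1/v2) with hR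
  have hb1 : 0 ≤ |x.2| ^ v2 := Real.rpow_nonneg (abs_nonneg _) _
  have hb2 : 0 ≤ |x.1| ^ v1 := Real.rpow_nonneg (abs_nonneg _) _
  have h1 : |x.1| < t ^ (1/v1) := by
    have := Real.rpow_lt_rpow (Real.rpow_nonneg (abs_nonneg _) _)
      (by linarith : |x.1| ^ v1 < t) (one_div_pos.2 hv1)
    rwa [← Real.rpow_mul (abs_nonneg _), mul_one_div_cancel hv1.ne', Real.rpow_one] at this
  have h2 : |x.2| < t ^ (1/v2) := by
    have := Real.rpow_lt_rpow (Real.rpow_nonneg (abs_nonneg _) _)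
      (by linarith : |x.2| ^ v2 < t) (one_div_pos.2 hv2)
    rwa [← Real.rpow_mul (abs_nonneg _), mul_one_div_cancel hv2.ne', Real.rpow_one] at this
  have hp1 : 0 < t ^ (1/v1) := Real.rpow_pos_of_pos ht _
  have hp2 : 0 < t ^ (1/v2) := Real.rpow_pos_of_pos ht _
  constructor
  · have : |x.1| < R := by rw [hR]; linarith
    exact abs_lt.1 this
  · have : |x.2| < R := by rw [hR]; linarith
    exact abs_lt.1 this

lemma volume_slev_lt_top {v1 v2 : ℝ} (hv1 : 0 < v1) (hv2 : 0 < v2) {t : ℝ} (ht : 0 < t) :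
    volume (slev v1 v2 t) < ∞ := by
  refine lt_of_le_of_lt (measure_mono (slev_subset_box hv1 hv2 ht)) ?_
  rw [Measure.volume_eq_prod, Measure.prod_prod, Real.volume_Ioo]
  exact ENNReal.mul_lt_top ENNReal.ofReal_lt_top ENNReal.ofReal_lt_top

lemma volume_slev_pos {v1 v2 : ℝ} (hv1 : 0 < v1) (hv2 : 0 < v2) {t : ℝ} (ht : 0 < t) :
    0 < volume (slev v1 v2 t) := by
  set r := min ((t/2) ^ (1/v1)) ((t/2) ^ (1/v2)) with hr_def
  have ht2 : 0 < t / 2 := by linarith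
  have hr : 0 < r := lt_min (Real.rpow_pos_of_pos ht2 _) (Real.rpow_pos_of_pos ht2 _)
  have hsub : Ioo (-r) r ×ˢ Ioo (-r) r ⊆ slev v1 v2 t := by
    rintro x ⟨hx1, hx2⟩
    rw [mem_slev, rho]
    have ha1 : |x.1| < r := abs_lt.2 ⟨hx1.1, hx1.2⟩
    have ha2 : |x.2| < r := abs_lt.2 ⟨hx2.1, hx2.2⟩
    have e1 : |x.1| ^ v1 < t / 2 := by
      have h := Real.rpow_lt_rpow (abs_nonneg _) (lt_of_lt_of_le ha1 (min_le_left _ _)) hv1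
      rwa [rpow_one_div_self ht2 hv1] at h
    have e2 : |x.2| ^ v2 < t / 2 := by
      have h := Real.rpow_lt_rpow (abs_nonneg _) (lt_of_lt_of_le ha2 (min_le_right _ _)) hv2
      rwa [rpow_one_div_self ht2 hv2] at h
    linarith
  refine lt_of_lt_of_le ?_ (measure_mono hsub)
  rw [Measure.volume_eq_prod, Measure.prod_prod, Real.volume_Ioo]
  have h0 : (0:ℝ≥0∞) < ENNReal.ofReal (r - -r) := ENNReal.ofReal_pos.2 (by linarith)
  exact ENNReal.mul_pos h0.ne' h0.ne'


lemma lintegral_rpow_Ioi_lt_top_iff {a s : ℝ} (ha : 0 < a) :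
    (∫⁻ t in Ioi a, ENNReal.ofReal (t ^ s)) < ∞ ↔ s < -1 := by
  rw [← integrableOn_Ioi_rpow_iff ha]
  have hmeas : Measurable fun t : ℝ => t ^ s := by fun_prop
  have hnn : 0 ≤ᵐ[volume.restrict (Ioi a)] fun t : ℝ => t ^ s := by
    filter_upwards [ae_restrict_mem measurableSet_Ioi] with t ht
    exact Real.rpow_nonneg (ha.trans ht).le _
  constructor
  · intro h
    exact ⟨hmeas.aestronglyMeasurable, (hasFiniteIntegral_iff_ofReal hnn).2 h⟩
  · intro h
    exact (hasFiniteIntegral_iff_ofReal hnn).1 h.2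

lemma rho_zero {v1 v2 : ℝ} (hv1 : 0 < v1) (hv2 : 0 < v2) : rho v1 v2 0 = 0 := by
  simp [rho, Real.zero_rpow hv1.ne', Real.zero_rpow hv2.ne']

lemma lintegral_slev {v1 v2 w : ℝ} (hv1 : 0 < v1) (hv2 : 0 < v2) (hw : 0 < w)
    {ε : ℝ} (hε : 0 < ε) :
    ∫⁻ x in slev v1 v2 ε, ENNReal.ofReal (rho v1 v2 x ^ (-w))
      = ∫⁻ t in Ioi (0:ℝ), volume (slev v1 v2 (min ε (t ^ (-w⁻¹)))) := by
  have hnn : 0 ≤ᵐ[volume.restrict (slev v1 v2 ε)]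
      fun x : ℝ × ℝ => rho v1 v2 x ^ (-w) :=
    ae_of_all _ fun x => Real.rpow_nonneg (rho_nonneg v1 v2 x) _
  rw [lintegral_eq_lintegral_meas_lt _ hnn ((measurable_f v1 v2 w).aemeasurable)]
  refine setLIntegral_congr_fun measurableSet_Ioi (fun t ht => ?_)
  have htpos : (0:ℝ) < t := ht
  have hsetm : MeasurableSet {a : ℝ × ℝ | t < rho v1 v2 a ^ (-w)} :=
    measurableSet_lt measurable_const (measurable_f v1 v2 w)
  rw [Measure.restrict_apply hsetm]
  have hset : {a : ℝ × ℝ | t < rho v1 v2 a ^ (-w)} ∩ slev v1 v2 ε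
      = slev v1 v2 (min ε (t ^ (-w⁻¹))) \ {0} := by
    ext x
    by_cases hx : x = 0
    · subst hx
      simp only [Set.mem_inter_iff, Set.mem_setOf_eq, mem_slev, Set.mem_diff,
        Set.mem_singleton_iff, rho_zero hv1 hv2]
      rw [Real.zero_rpow (neg_ne_zero.2 hw.ne')]
      simp [not_lt.2 htpos.le]
    · have hρ : 0 < rho v1 v2 x := rho_pos hx
      have key : t < rho v1 v2 x ^ (-w) ↔ rho v1 v2 x < t ^ (-w⁻¹) := by
        rw [Real.rpow_neg (rho_nonneg v1 v2 x), Real.rpow_neg htpos.le,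
          ← Real.inv_rpow htpos.le]
        rw [lt_inv_comm₀ htpos (Real.rpow_pos_of_pos hρ _)]
        exact (Real.lt_rpow_inv_iff_of_pos hρ.le (inv_nonneg.2 htpos.le) hw).symm
      simp only [Set.mem_inter_iff, Set.mem_setOf_eq, mem_slev, Set.mem_diff,
        Set.mem_singleton_iff, hx, not_false_iff, and_true, key, lt_min_iff]
      tauto
  rw [hset]
  have h0 : volume ({(0 : ℝ × ℝ)} : Set (ℝ × ℝ)) = 0 := by
    have : ({(0 : ℝ × ℝ)} : Set (ℝ × ℝ)) = ({0} : Set ℝ) ×ˢ ({0} : Set ℝ) := by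
      rw [Set.singleton_prod_singleton]
      rfl
    rw [this, Measure.volume_eq_prod, Measure.prod_prod, Real.volume_singleton, mul_zero]
  rw [measure_diff_null h0]

lemma lintegral_slev_lt_top_iff {v1 v2 w : ℝ} (hv1 : 0 < v1) (hv2 : 0 < v2) (hw : 0 < w)
    {ε : ℝ} (hε : 0 < ε) :
    (∫⁻ x in slev v1 v2 ε, ENNReal.ofReal (rho v1 v2 x ^ (-w))) < ∞
      ↔ w < 1 / v1 + 1 / v2 := by
  set Υ : ℝ := 1 / v1 + 1 / v2 with hΥ_def
  have hΥ : 0 < Υ := by positivity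
  set C := volume (slev v1 v2 1) with hC_def
  have hC0 : C ≠ 0 := (volume_slev_pos hv1 hv2 one_pos).ne'
  have hCtop : C ≠ ∞ := (volume_slev_lt_top hv1 hv2 one_pos).ne
  rw [lintegral_slev hv1 hv2 hw hε]
  set a := ε ^ (-w) with ha_def
  have ha : 0 < a := Real.rpow_pos_of_pos hε _
  have haε : a ^ (-w⁻¹) = ε := by
    rw [ha_def, ← Real.rpow_mul hε.le, neg_mul_neg, mul_inv_cancel₀ hw.ne', Real.rpow_one]
  have hsplit : Ioi (0:ℝ) = Ioc 0 a ∪ Ioi a := (Ioc_union_Ioi_eq_Ioi ha.le).symm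
  rw [hsplit, lintegral_union measurableSet_Ioi Ioc_disjoint_Ioi_same]
  have h1 : ∫⁻ t in Ioc (0:ℝ) a, volume (slev v1 v2 (min ε (t ^ (-w⁻¹))))
      = volume (slev v1 v2 ε) * ENNReal.ofReal a := by
    rw [setLIntegral_congr_fun measurableSet_Ioc
      (fun t (ht : t ∈ Ioc (0:ℝ) a) => ?_), setLIntegral_const,
      Real.volume_Ioc, sub_zero]
    have hmin : min ε (t ^ (-w⁻¹)) = ε := by
      refine min_eq_left ?_
      have := Real.rpow_le_rpow_of_nonpos ht.1 ht.2 (neg_nonpos.2 (inv_pos.2 hw).le)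
      rwa [haε] at this
    rw [hmin]
  have h2 : ∫⁻ t in Ioi a, volume (slev v1 v2 (min ε (t ^ (-w⁻¹))))
      = (∫⁻ t in Ioi a, ENNReal.ofReal (t ^ (-w⁻¹ * Υ))) * C := by
    rw [← lintegral_mul_const' C _ hCtop]
    refine setLIntegral_congr_fun measurableSet_Ioi
      (fun t (ht : t ∈ Ioi a) => ?_)
    have htpos : 0 < t := ha.trans ht
    have hmin : min ε (t ^ (-w⁻¹)) = t ^ (-w⁻¹) := by
      refine min_eq_right ?_
      have := Real.rpow_le_rpow_of_nonpos ha (le_of_lt ht) (neg_nonpos.2 (inv_pos.2 hw).le)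
      rwa [haε] at this
    rw [hmin, volume_slev hv1 hv2 (Real.rpow_pos_of_pos htpos _), ← hΥ_def, ← hC_def,
      ← Real.rpow_mul htpos.le]
  rw [h1, h2]
  have hfin1 : volume (slev v1 v2 ε) * ENNReal.ofReal a < ∞ :=
    ENNReal.mul_lt_top (volume_slev_lt_top hv1 hv2 hε) ENNReal.ofReal_lt_top
  rw [ENNReal.add_lt_top]
  constructor
  · rintro ⟨-, h⟩
    rcases ENNReal.mul_lt_top_iff.1 h with ⟨hJ, -⟩ | hJ | hJ
    · have := (lintegral_rpow_Ioi_lt_top_iff ha).1 hJ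
      have h1 : 1 < w⁻¹ * Υ := by
        have := neg_lt_neg_iff.1 (by rwa [neg_mul] at this)
        linarith
      rw [inv_mul_eq_div] at h1
      exact (one_lt_div hw).1 h1
    · -- J = 0 is impossible: the integrand is positive on a set of positive measure.
      exfalso
      rw [lintegral_eq_zero_iff (by fun_prop : Measurable fun t : ℝ =>
        ENNReal.ofReal (t ^ (-w⁻¹ * Υ)))] at hJ
      have hfalse : ∀ᵐ t ∂volume.restrict (Ioi a), False := by
        filter_upwards [hJ, ae_restrict_mem measurableSet_Ioi] with t h1 h2
        have : (0:ℝ≥0∞) < ENNReal.ofReal (t ^ (-w⁻¹ * Υ)) :=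
          ENNReal.ofReal_pos.2 (Real.rpow_pos_of_pos (ha.trans h2) _)
        rw [h1] at this
        exact lt_irrefl _ this
      have hne : volume.restrict (Ioi a) ≠ 0 := by
        rw [Ne, Measure.restrict_eq_zero, Real.volume_Ioi]
        simp
      exact (MeasureTheory.ae_neBot.2 hne).ne (Filter.eventually_false_iff_eq_bot.1 hfalse)
    · exact absurd hJ hC0
  · intro hwΥ
    refine ⟨hfin1, ?_⟩
    refine ENNReal.mul_lt_top ?_ (lt_top_iff_ne_top.2 hCtop)
    rw [lintegral_rpow_Ioi_lt_top_iff ha, neg_mul, neg_lt_neg_iff]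
    rw [inv_mul_eq_div]
    exact (one_lt_div hw).2 hwΥ


end Stmt17Aux

theorem stmt17 (v1 v2 δ w : ℝ) (hv1 : 0 < v1) (hv2 : 0 < v2) (hδ : 0 < δ) (hw : 0 < w) :
    IntegrableOn (fun x : ℝ × ℝ => rho v1 v2 x ^ (-w))
        {x : ℝ × ℝ | |x.1| + |x.2| < δ} ↔
      w < 1 / v1 + 1 / v2 := by
  have hnn : ∀ x : ℝ × ℝ, 0 ≤ rho v1 v2 x ^ (-w) :=
    fun x => Real.rpow_nonneg (Stmt17Aux.rho_nonneg v1 v2 x) _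
  have hδ2 : 0 < δ / 2 := by linarith
  set ε := min ((δ/2) ^ v1) ((δ/2) ^ v2) with hε_def
  have hεpos : 0 < ε :=
    lt_min (Real.rpow_pos_of_pos hδ2 _) (Real.rpow_pos_of_pos hδ2 _)
  set M := δ ^ v1 + δ ^ v2 with hM_def
  have hMpos : 0 < M :=
    add_pos (Real.rpow_pos_of_pos hδ _) (Real.rpow_pos_of_pos hδ _)
  have hSD : Stmt17Aux.slev v1 v2 ε ⊆ {x : ℝ × ℝ | |x.1| + |x.2| < δ} := by
    intro x hx
    rw [Stmt17Aux.mem_slev, rho] at hx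
    have hb1 : 0 ≤ |x.1| ^ v1 := Real.rpow_nonneg (abs_nonneg _) _
    have hb2 : 0 ≤ |x.2| ^ v2 := Real.rpow_nonneg (abs_nonneg _) _
    have h1 : |x.1| ^ v1 < (δ/2) ^ v1 :=
      lt_of_lt_of_le (by linarith : |x.1| ^ v1 < ε) (min_le_left _ _)
    have h2 : |x.2| ^ v2 < (δ/2) ^ v2 :=
      lt_of_lt_of_le (by linarith : |x.2| ^ v2 < ε) (min_le_right _ _)
    have e1 : |x.1| < δ/2 := (Real.rpow_lt_rpow_iff (abs_nonneg _) hδ2.le hv1).1 h1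
    have e2 : |x.2| < δ/2 := (Real.rpow_lt_rpow_iff (abs_nonneg _) hδ2.le hv2).1 h2
    show |x.1| + |x.2| < δ
    linarith
  have hDM : {x : ℝ × ℝ | |x.1| + |x.2| < δ} ⊆ Stmt17Aux.slev v1 v2 M := by
    intro x hx
    have hx' : |x.1| + |x.2| < δ := hx
    have e1 : |x.1| ^ v1 < δ ^ v1 :=
      Real.rpow_lt_rpow (abs_nonneg _) (by have := abs_nonneg x.2; linarith) hv1
    have e2 : |x.2| ^ v2 < δ ^ v2 :=
      Real.rpow_lt_rpow (abs_nonneg _) (by have := abs_nonneg x.1; linarith) hv2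
    rw [Stmt17Aux.mem_slev, rho, hM_def]
    linarith
  constructor
  · intro h
    have h2 : IntegrableOn (fun x : ℝ × ℝ => rho v1 v2 x ^ (-w)) (Stmt17Aux.slev v1 v2 ε) :=
      h.mono_set hSD
    have h3 := (hasFiniteIntegral_iff_ofReal (ae_of_all _ hnn)).1 h2.hasFiniteIntegral
    exact (Stmt17Aux.lintegral_slev_lt_top_iff hv1 hv2 hw hεpos).1 h3
  · intro h
    have h3 : IntegrableOn (fun x : ℝ × ℝ => rho v1 v2 x ^ (-w)) (Stmt17Aux.slev v1 v2 M) :=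
      ⟨(Stmt17Aux.measurable_f v1 v2 w).aestronglyMeasurable,
        (hasFiniteIntegral_iff_ofReal (ae_of_all _ hnn)).2
          ((Stmt17Aux.lintegral_slev_lt_top_iff hv1 hv2 hw hMpos).2 h)⟩
    exact h3.mono_set hDM
end
end
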